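/- Let q > 0 and α > 1 satisfy q² + 2q ≥ 1/(α−1). Then for all y₂, x₂, G > 0 with q = G/x₂: y₂/x₂ + y₂/G ≤ α·(y₂/x₂ + y₂/(G+x₂)). -/

import Mathlib

theorem stmt_6 (q α : ℝ) (hq : 0 < q) (hα : 1 < α)
    (h : q ^ 2 + 2 * q ≥ 1 / (α - 1)) :
    ∀ y₂ x₂ G : ℝ, 0 < y₂ → 0 < x₂ → 0 < G → q = G / x₂ →
      y₂ / x₂ + y₂ / G ≤ α * (y₂ / x₂ + y₂ / (G + x₂)) := by
  intro y x G hy hx hG hqe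
  have hα1 : (0:ℝ) < α - 1 := by linarith
  have h1 : 1 ≤ (q ^ 2 + 2 * q) * (α - 1) := (div_le_iff₀ hα1).mp h
  subst hqe
  have hGx : 0 < G + x := by linarith
  have h2 : x ^ 2 ≤ (α - 1) * (G ^ 2 + 2 * G * x) := by
    have hx' : x ≠ 0 := ne_of_gt hx
    field_simp at h1
    nlinarith [h1]
  have h3 : 0 ≤ (α - 1) * (G ^ 2 + 2 * G * x) - x ^ 2 := by linarith
  rw [div_add_div _ _ (ne_of_gt hx) (ne_of_gt hG), div_add_div _ _ (ne_of_gt hx) (ne_of_gt hGx),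
    ← mul_div_assoc, div_le_div_iff₀ (by positivity) (by positivity)]
  nlinarith [mul_nonneg (mul_nonneg hy.le hG.le) h3, mul_pos hx hG, mul_pos hy hG]
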